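/- Let Q̂ be an n×n dual quaternion matrix and write Q̂ = (A₁ + A₂·j) + (A₃ + A₄·j)·ε with A₁, A₂, A₃, A₄ complex n×n matrices; define its dual complex adjoint matrix 𝒥(Q̂) = [[A₁, A₂], [−conj(A₂), conj(A₁)]] + [[A₃, A₄], [−conj(A₄), conj(A₃)]]·ε, a 2n×2n matrix over DualNumber ℂ. For a dual quaternion vector v̂ = (v₁ + v₂·j) + (v₃ + v₄·j)·ε (v₁,…,v₄ complex vectors) define ℱ(v̂) = (v₁; −conj(v₂)) + (v₃; −conj(v₄))·ε ∈ (DualNumber ℂ)^{2n}. Then for every λ̂ ∈ DualNumber ℂ (regarded on the right as a dual quaternion): Q̂.mulVec v̂ = (fun i => v̂ i * λ̂) if and only if [𝒥(Q̂).mulVec ℱ(v̂) = λ̂ • ℱ(v̂) or 𝒥(Q̂).mulVec ℱ(v̂·j) = conj(λ̂) • ℱ(v̂·j)], where v̂·j denotes componentwise right multiplication by j and conj on DualNumber ℂ conjugates both parts. Moreover ℱ(v̂) and ℱ(v̂·j) are orthogonal: ∑ᵢ conj(ℱ(v̂)ᵢ)·ℱ(v̂·j)ᵢ = 0 in DualNumber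 ℂ. -/

import Mathlib

local notation "ℍ" => Quaternion ℝ

/-- The first complex component of a quaternion: `q = c1 q + (c2 q) * j`. -/
noncomputable def c1 (q : ℍ) : ℂ := ⟨q.re, q.imI⟩

/-- The second complex component of a quaternion: `q = c1 q + (c2 q) * j`. -/
noncomputable def c2 (q : ℍ) : ℂ := ⟨q.imJ, q.imK⟩

/-- The dual complex matrix with standard part `A` and dual part `B`. -/
noncomputable def dmC {ι : Type*} (A B : Matrix ι ι ℂ) : Matrix ι ι (DualNumber ℂ) :=
  A.map TrivSqZeroExt.inl + B.map TrivSqZeroExt.inr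

/-- The complex adjoint of a quaternion matrix. -/
noncomputable def chiQ {n : ℕ} (M : Matrix (Fin n) (Fin n) ℍ) :
    Matrix (Fin n ⊕ Fin n) (Fin n ⊕ Fin n) ℂ :=
  Matrix.fromBlocks (M.map c1) (M.map c2)
    (-(M.map fun q => starRingEnd ℂ (c2 q))) (M.map fun q => starRingEnd ℂ (c1 q))

/-- The dual complex adjoint matrix `𝒥(Q̂)` of a dual quaternion matrix. -/
noncomputable def JQ {n : ℕ} (Q : Matrix (Fin n) (Fin n) (DualNumber ℍ)) :
    Matrix (Fin n ⊕ Fin n) (Fin n ⊕ Fin n) (DualNumber ℂ) :=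
  dmC (chiQ (Matrix.of fun i j => (Q i j).fst)) (chiQ (Matrix.of fun i j => (Q i j).snd))

/-- The map `ℱ` from dual quaternion vectors to dual complex vectors of doubled length. -/
noncomputable def Fv {n : ℕ} (v : Fin n → DualNumber ℍ) : Fin n ⊕ Fin n → DualNumber ℂ :=
  Sum.elim
    (fun i => TrivSqZeroExt.inl (c1 (v i).fst) + TrivSqZeroExt.inr (c1 (v i).snd))
    (fun i => TrivSqZeroExt.inl (-(starRingEnd ℂ (c2 (v i).fst))) +
      TrivSqZeroExt.inr (-(starRingEnd ℂ (c2 (v i).snd))))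

/-- The quaternion unit `j`. -/
noncomputable def jq : ℍ := ⟨0, 0, 1, 0⟩

/-- Componentwise right multiplication of a dual quaternion vector by `j`. -/
noncomputable def vmulj {n : ℕ} (v : Fin n → DualNumber ℍ) : Fin n → DualNumber ℍ :=
  fun i => v i * TrivSqZeroExt.inl jq

/-- Conjugation on dual complex numbers, conjugating both parts. -/
noncomputable def dconj (z : DualNumber ℂ) : DualNumber ℂ :=
  TrivSqZeroExt.inl (starRingEnd ℂ z.fst) + TrivSqZeroExt.inr (starRingEnd ℂ z.snd)

/-- A dual complex number regarded as a dual quaternion. -/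
noncomputable def toDQ (z : DualNumber ℂ) : DualNumber ℍ :=
  TrivSqZeroExt.inl (⟨z.fst.re, z.fst.im, 0, 0⟩ : ℍ) +
    TrivSqZeroExt.inr (⟨z.snd.re, z.snd.im, 0, 0⟩ : ℍ)


open ComplexConjugate

lemma quat_eq_iff (p q : ℍ) : p = q ↔ c1 p = c1 q ∧ c2 p = c2 q := by
  constructor
  · rintro rfl; exact ⟨rfl, rfl⟩
  · rintro ⟨h1, h2⟩
    rw [Complex.ext_iff] at h1 h2
    ext <;> simp_all [c1, c2]

noncomputable def c1hom : ℍ →+ ℂ where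
  toFun := c1
  map_zero' := by simp [c1, Complex.ext_iff, Quaternion.re_zero, Quaternion.imI_zero]
  map_add' p q := by simp [c1, Complex.ext_iff]

noncomputable def c2hom : ℍ →+ ℂ where
  toFun := c2
  map_zero' := by simp [c2, Complex.ext_iff, Quaternion.imJ_zero, Quaternion.imK_zero]
  map_add' p q := by simp [c2, Complex.ext_iff]

lemma c1_sum {ι : Type*} (s : Finset ι) (f : ι → ℍ) :
    c1 (∑ j ∈ s, f j) = ∑ j ∈ s, c1 (f j) := map_sum c1hom f s
lemma c2_sum {ι : Type*} (s : Finset ι) (f : ι → ℍ) :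
    c2 (∑ j ∈ s, f j) = ∑ j ∈ s, c2 (f j) := map_sum c2hom f s
lemma c1_add (p q : ℍ) : c1 (p + q) = c1 p + c1 q := map_add c1hom p q
lemma c2_add (p q : ℍ) : c2 (p + q) = c2 p + c2 q := map_add c2hom p q

lemma c1_mul (p q : ℍ) : c1 (p * q) = c1 p * c1 q - c2 p * conj (c2 q) := by
  simp [c1, c2, Complex.ext_iff, Quaternion.re_mul, Quaternion.imI_mul]
  constructor <;> ring
lemma c2_mul (p q : ℍ) : c2 (p * q) = c1 p * c2 q + c2 p * conj (c1 q) := by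
  simp [c1, c2, Complex.ext_iff, Quaternion.imJ_mul, Quaternion.imK_mul]
  constructor <;> ring

noncomputable def cq (z : ℂ) : ℍ := ⟨z.re, z.im, 0, 0⟩
lemma c1_cq (z : ℂ) : c1 (cq z) = z := rfl
lemma c2_cq (z : ℂ) : c2 (cq z) = 0 := by simp [c2, cq, Complex.ext_iff]

/-- The canonical system of complex equations. -/
def Eqs {n : ℕ} (Q : Matrix (Fin n) (Fin n) (DualNumber ℍ)) (v : Fin n → DualNumber ℍ)
    (lam : DualNumber ℂ) : Prop :=
  ∀ i : Fin n,
   ((∑ j, (c1 (Q i j).fst * c1 (v j).fst - c2 (Q i j).fst * conj (c2 (v j).fst)))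
      = c1 (v i).fst * lam.fst)
 ∧ ((∑ j, (c1 (Q i j).fst * c2 (v j).fst + c2 (Q i j).fst * conj (c1 (v j).fst)))
      = c2 (v i).fst * conj lam.fst)
 ∧ ((∑ j, (c1 (Q i j).fst * c1 (v j).snd - c2 (Q i j).fst * conj (c2 (v j).snd)
        + (c1 (Q i j).snd * c1 (v j).fst - c2 (Q i j).snd * conj (c2 (v j).fst))))
      = c1 (v i).fst * lam.snd + c1 (v i).snd * lam.fst)
 ∧ ((∑ j, (c1 (Q i j).fst * c2 (v j).snd + c2 (Q i j).fst * conj (c1 (v j).snd)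
        + (c1 (Q i j).snd * c2 (v j).fst + c2 (Q i j).snd * conj (c1 (v j).fst))))
      = c2 (v i).fst * conj lam.snd + c2 (v i).snd * conj lam.fst)

lemma LHS_iff {n : ℕ} (Q : Matrix (Fin n) (Fin n) (DualNumber ℍ)) (v : Fin n → DualNumber ℍ)
    (lam : DualNumber ℂ) :
    (Q.mulVec v = fun i => v i * toDQ lam) ↔ Eqs Q v lam := by
  rw [funext_iff]
  refine forall_congr' fun i => ?_
  rw [Matrix.mulVec, dotProduct, TrivSqZeroExt.ext_iff]
  have hf : (toDQ lam).fst = cq lam.fst := by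
    erw [toDQ, TrivSqZeroExt.fst_add, TrivSqZeroExt.fst_inl, TrivSqZeroExt.fst_inr, add_zero]; rfl
  have hs : (toDQ lam).snd = cq lam.snd := by
    erw [toDQ, TrivSqZeroExt.snd_add, TrivSqZeroExt.snd_inl, TrivSqZeroExt.snd_inr, zero_add]; rfl
  rw [TrivSqZeroExt.fst_sum, TrivSqZeroExt.snd_sum]
  simp only [TrivSqZeroExt.fst_mul, TrivSqZeroExt.snd_mul, hf, hs, smul_eq_mul,
    MulOpposite.op_smul, MulOpposite.smul_eq_mul_unop, MulOpposite.unop_op]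
  rw [quat_eq_iff, quat_eq_iff]
  simp only [c1_sum, c2_sum, c1_add, c2_add, c1_mul, c2_mul, c1_cq, c2_cq, mul_zero, zero_add,
    add_zero, mul_comm, map_zero, sub_zero, zero_mul]
  tauto

lemma RHS_iff {n : ℕ} (Q : Matrix (Fin n) (Fin n) (DualNumber ℍ)) (v : Fin n → DualNumber ℍ)
    (lam : DualNumber ℂ) :
    (JQ Q).mulVec (Fv v) = lam • Fv v ↔ Eqs Q v lam := by
  rw [funext_iff, Sum.forall, ← forall_and]
  refine forall_congr' fun i => ?_
  simp only [Matrix.mulVec, dotProduct, Fintype.sum_sum_type, TrivSqZeroExt.ext_iff,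
    JQ, dmC, chiQ, Fv, Matrix.add_apply, Matrix.map_apply, Matrix.fromBlocks_apply₁₁,
    Matrix.fromBlocks_apply₁₂, Matrix.fromBlocks_apply₂₁, Matrix.fromBlocks_apply₂₂,
    Matrix.neg_apply, Sum.elim_inl, Sum.elim_inr, Pi.smul_apply, smul_eq_mul,
    TrivSqZeroExt.fst_sum, TrivSqZeroExt.snd_sum, TrivSqZeroExt.fst_mul, TrivSqZeroExt.snd_mul,
    TrivSqZeroExt.fst_add, TrivSqZeroExt.snd_add, TrivSqZeroExt.fst_inl, TrivSqZeroExt.snd_inl,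
    TrivSqZeroExt.fst_inr, TrivSqZeroExt.snd_inr, Matrix.of_apply,
    MulOpposite.op_smul, MulOpposite.smul_eq_mul_unop, MulOpposite.unop_op,
    mul_zero, zero_mul, add_zero, zero_add, mul_neg, neg_mul, neg_neg,
    Finset.sum_add_distrib, Finset.sum_sub_distrib, Finset.sum_neg_distrib,
    Eqs, mul_comm]
  constructor
  · rintro ⟨⟨h1, h3⟩, h2, h4⟩
    have h2' := congrArg (starRingEnd ℂ) h2
    have h4' := congrArg (starRingEnd ℂ) h4
    simp only [map_add, map_neg, map_sum, map_mul, Complex.conj_conj, map_zero] at h2' h4'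
    simp only [mul_comm] at h2' h4'
    exact ⟨by linear_combination h1, by linear_combination -h2', by linear_combination h3,
      by linear_combination -h4'⟩
  · rintro ⟨h1, h2, h3, h4⟩
    have h2' := congrArg (starRingEnd ℂ) h2
    have h4' := congrArg (starRingEnd ℂ) h4
    simp only [map_add, map_sub, map_sum, map_mul, Complex.conj_conj, map_zero] at h2' h4'
    simp only [mul_comm] at h2' h4'
    exact ⟨⟨by linear_combination h1, by linear_combination h3⟩, by linear_combination -h2',
      by linear_combination -h4'⟩

lemma c1_jq : c1 jq = 0 := by simp [c1, jq, Complex.ext_iff]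
lemma c2_jq : c2 jq = 1 := by simp [c2, jq, Complex.ext_iff]

lemma c1_mul_jq (q : ℍ) : c1 (q * jq) = -c2 q := by
  simp [c1_mul, c1_jq, c2_jq]
lemma c2_mul_jq (q : ℍ) : c2 (q * jq) = c1 q := by
  simp [c2_mul, c1_jq, c2_jq]

lemma jq_mul_jq : jq * jq = -1 := by
  ext <;> simp [Quaternion.re_mul, Quaternion.imI_mul, Quaternion.imJ_mul,
    Quaternion.imK_mul] <;> simp [jq, Quaternion.re_one, Quaternion.imI_one, Quaternion.imJ_one, Quaternion.imK_one]

noncomputable def Ju : (DualNumber ℍ)ˣ where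
  val := TrivSqZeroExt.inl jq
  inv := -TrivSqZeroExt.inl jq
  val_inv := by
    rw [mul_neg, ← TrivSqZeroExt.inl_mul, jq_mul_jq]
    simp
  inv_val := by
    rw [neg_mul, ← TrivSqZeroExt.inl_mul, jq_mul_jq]
    simp

lemma jq_mul_cq (z : ℂ) : jq * cq (conj z) = cq z * jq := by
  ext <;> simp [Quaternion.re_mul, Quaternion.imI_mul, Quaternion.imJ_mul,
    Quaternion.imK_mul] <;> simp [jq, cq]

lemma J_toDQ (lam : DualNumber ℂ) :
    TrivSqZeroExt.inl jq * toDQ (dconj lam) = toDQ lam * TrivSqZeroExt.inl jq := by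
  have hf : ∀ z : DualNumber ℂ, (toDQ z).fst = cq z.fst := fun z => by
    erw [toDQ, TrivSqZeroExt.fst_add, TrivSqZeroExt.fst_inl, TrivSqZeroExt.fst_inr, add_zero]; rfl
  have hs : ∀ z : DualNumber ℂ, (toDQ z).snd = cq z.snd := fun z => by
    erw [toDQ, TrivSqZeroExt.snd_add, TrivSqZeroExt.snd_inl, TrivSqZeroExt.snd_inr, zero_add]; rfl
  rw [TrivSqZeroExt.ext_iff]
  constructor
  · simp only [TrivSqZeroExt.fst_mul, TrivSqZeroExt.fst_inl, hf, dconj,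
      TrivSqZeroExt.fst_add, TrivSqZeroExt.fst_inr, add_zero]
    exact jq_mul_cq _
  · simp only [TrivSqZeroExt.snd_mul, TrivSqZeroExt.snd_inl, hf, hs, dconj,
      TrivSqZeroExt.snd_add, TrivSqZeroExt.snd_inr, TrivSqZeroExt.fst_add,
      TrivSqZeroExt.fst_inl, TrivSqZeroExt.fst_inr, add_zero, zero_add, smul_zero,
      smul_eq_mul, MulOpposite.op_smul, MulOpposite.smul_eq_mul_unop, MulOpposite.unop_op,
      zero_mul, mul_zero]
    exact jq_mul_cq _

lemma shift_iff {n : ℕ} (Q : Matrix (Fin n) (Fin n) (DualNumber ℍ)) (v : Fin n → DualNumber ℍ)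
    (lam : DualNumber ℂ) :
    (Q.mulVec v = fun i => v i * toDQ lam) ↔
      (Q.mulVec (vmulj v) = fun i => vmulj v i * toDQ (dconj lam)) := by
  rw [funext_iff, funext_iff]
  refine forall_congr' fun i => ?_
  have h1 : Q.mulVec (vmulj v) i = Q.mulVec v i * TrivSqZeroExt.inl jq := by
    simp only [Matrix.mulVec, dotProduct, vmulj, Finset.sum_mul, mul_assoc]
  have h2 : vmulj v i * toDQ (dconj lam) = (v i * toDQ lam) * TrivSqZeroExt.inl jq := by
    rw [vmulj, mul_assoc, J_toDQ, ← mul_assoc]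
  rw [h1, h2]
  exact (Units.mul_left_inj Ju).symm

lemma orth {n : ℕ} (v : Fin n → DualNumber ℍ) :
    ∑ i, dconj (Fv v i) * Fv (vmulj v) i = 0 := by
  rw [Fintype.sum_sum_type, ← Finset.sum_add_distrib]
  refine Finset.sum_eq_zero fun i _ => ?_
  have hf : (vmulj v i).fst = (v i).fst * jq := by
    simp [vmulj, TrivSqZeroExt.fst_mul]
  have hs : (vmulj v i).snd = (v i).snd * jq := by
    simp [vmulj, TrivSqZeroExt.snd_mul, MulOpposite.smul_eq_mul_unop]
  rw [TrivSqZeroExt.ext_iff]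
  simp only [Fv, dconj, Sum.elim_inl, Sum.elim_inr, hf, hs, c1_mul_jq, c2_mul_jq,
    TrivSqZeroExt.fst_add, TrivSqZeroExt.snd_add, TrivSqZeroExt.fst_inl, TrivSqZeroExt.snd_inl,
    TrivSqZeroExt.fst_inr, TrivSqZeroExt.snd_inr, TrivSqZeroExt.fst_mul, TrivSqZeroExt.snd_mul,
    TrivSqZeroExt.fst_zero, TrivSqZeroExt.snd_zero, map_neg, Complex.conj_conj,
    add_zero, zero_add, smul_eq_mul, MulOpposite.op_smul, MulOpposite.smul_eq_mul_unop,
    MulOpposite.unop_op, mul_neg, neg_mul, neg_neg, map_zero, mul_zero, zero_mul]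
  constructor <;> ring

theorem stmt14 {n : ℕ} (Q : Matrix (Fin n) (Fin n) (DualNumber ℍ))
    (v : Fin n → DualNumber ℍ) (lam : DualNumber ℂ) :
    ((Q.mulVec v = fun i => v i * toDQ lam) ↔
      ((JQ Q).mulVec (Fv v) = lam • Fv v ∨
        (JQ Q).mulVec (Fv (vmulj v)) = dconj lam • Fv (vmulj v))) ∧
    ∑ i, dconj (Fv v i) * Fv (vmulj v) i = 0 := by
  refine ⟨?_, orth v⟩
  have h2 : ((JQ Q).mulVec (Fv (vmulj v)) = dconj lam • Fv (vmulj v)) ↔ Eqs Q v lam := by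
    rw [RHS_iff, ← LHS_iff, ← shift_iff, LHS_iff]
  rw [LHS_iff, RHS_iff, h2, or_self]
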